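/- arXiv:1505.07604 — 7 statements merged into one kernel-verified Lean document; each statement's English description precedes it below -/
import Mathlib

section
/- If a Banach space X admits a cofinal rectangle-family A ⊆ S(X) × S(X*) such that for every V × Y ∈ A the restriction map Y ∋ x* ↦ x*|_V ∈ V* is surjective, then X is an Asplund space. -/
open TopologicalSpace

/-- The family of all closed separable linear subspaces of a normed space. -/
def SepSub (E : Type*) [NormedAddCommGroup E] [NormedSpace ℝ E] : Set (Submodule ℝ E) :=
  {V | IsClosed (V : Set E) ∧ IsSeparable (V : Set E)}

/-- If `X` admits a cofinal rectangle-family `A ⊆ S(X) × S(X*)` such that for every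
`V × Y ∈ A` the restriction map `Y ∋ x* ↦ x*|_V ∈ V*` is surjective, then `X` is
Asplund, i.e. every closed separable subspace of `X` has separable dual. -/
theorem asplund_of_cofinal_surjective_rectangle_family
    {X : Type*} [NormedAddCommGroup X] [NormedSpace ℝ X] [CompleteSpace X]
    (A : Set (Submodule ℝ X × Submodule ℝ (X →L[ℝ] ℝ)))
    (hsub : ∀ p ∈ A, p.1 ∈ SepSub X ∧ p.2 ∈ SepSub (X →L[ℝ] ℝ))
    (hcof : ∀ V₀ ∈ SepSub X, ∀ Y₀ ∈ SepSub (X →L[ℝ] ℝ),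
      ∃ p ∈ A, V₀ ≤ p.1 ∧ Y₀ ≤ p.2)
    (hsurj : ∀ p ∈ A, ∀ v : (p.1 : Submodule ℝ X) →L[ℝ] ℝ,
      ∃ x ∈ p.2, x.comp p.1.subtypeL = v) :
    ∀ Z ∈ SepSub X, SeparableSpace ((Z : Submodule ℝ X) →L[ℝ] ℝ) := by
  intro Z hZ
  have hbot : (⊥ : Submodule ℝ (X →L[ℝ] ℝ)) ∈ SepSub (X →L[ℝ] ℝ) := by
    constructor
    · simpa [Submodule.bot_coe] using isClosed_singleton (x := (0 : X →L[ℝ] ℝ))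
    · simpa [Submodule.bot_coe] using
        (Set.countable_singleton (0 : X →L[ℝ] ℝ)).isSeparable
  obtain ⟨p, hpA, hZV, -⟩ := hcof Z hZ ⊥ hbot
  obtain ⟨-, hYsep⟩ := hsub p hpA
  -- restriction map X* → V*
  let φ : (X →L[ℝ] ℝ) →L[ℝ] ((p.1 : Submodule ℝ X) →L[ℝ] ℝ) :=
    (ContinuousLinearMap.compL ℝ (p.1 : Submodule ℝ X) X ℝ).flip p.1.subtypeL
  have hVsep : SeparableSpace ((p.1 : Submodule ℝ X) →L[ℝ] ℝ) := by
    rw [← isSeparable_univ_iff]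
    have himg : IsSeparable (φ '' (p.2 : Set (X →L[ℝ] ℝ))) :=
      hYsep.2.image φ.continuous
    have : (Set.univ : Set ((p.1 : Submodule ℝ X) →L[ℝ] ℝ)) ⊆
        φ '' (p.2 : Set (X →L[ℝ] ℝ)) := by
      intro v _
      obtain ⟨x, hx, hxv⟩ := hsurj p hpA v
      exact ⟨x, hx, hxv⟩
    exact himg.mono this
  -- inclusion Z → V
  let ι : (Z : Submodule ℝ X) →L[ℝ] (p.1 : Submodule ℝ X) :=
    Z.subtypeL.codRestrict p.1 (fun z => hZV z.2)
  let ψ : ((p.1 : Submodule ℝ X) →L[ℝ] ℝ) →L[ℝ] ((Z : Submodule ℝ X) →L[ℝ] ℝ) :=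
    (ContinuousLinearMap.compL ℝ (Z : Submodule ℝ X) (p.1 : Submodule ℝ X) ℝ).flip ι
  have hψ : Function.Surjective ψ := by
    intro g
    obtain ⟨G, hG, -⟩ := exists_extension_norm_eq Z g
    refine ⟨G.comp p.1.subtypeL, ?_⟩
    ext z
    exact hG z
  rw [← isSeparable_univ_iff]
  have : (Set.univ : Set ((Z : Submodule ℝ X) →L[ℝ] ℝ)) = ψ '' Set.univ := by
    rw [Set.image_univ, Set.range_eq_univ.mpr hψ]
  rw [this]
  exact ((isSeparable_univ_iff.mpr hVsep)).image ψ.continuous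
end

section
/- Let X be a Banach space, V₁ ⊆ V₂ ⊆ ⋯ an increasing sequence of closed subspaces of X with closed union V, and Y₁ ⊆ Y₂ ⊆ ⋯ an increasing sequence of closed subspaces of X* with closed union Y. If for every i and every x* ∈ Yᵢ one has ‖x*‖ = ‖x*|_{Vᵢ}‖, then ‖x*‖ = ‖x*|_V‖ for every x* ∈ Y; moreover, if additionally each restriction map Yᵢ → Vᵢ* is surjective and V* ⊆ closure of Y|_V, then the restriction map Y → V* is a surjective isometry. -/
/-- Limit along increasing sequences of subspaces: if each `x* ∈ Yᵢ` attains its norm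
on `Vᵢ`, then each `x*` in the closed union `Y` attains its norm on the closed union `V`;
moreover, if each restriction map `Yᵢ → Vᵢ*` is surjective and `V*` is contained in the
closure of `Y|_V`, then the restriction map `Y → V*` is a surjective isometry. -/
theorem restriction_isometry_limit
    {X : Type*} [NormedAddCommGroup X] [NormedSpace ℝ X] [CompleteSpace X]
    (V : ℕ → Submodule ℝ X) (Y : ℕ → Submodule ℝ (X →L[ℝ] ℝ))
    (hVcl : ∀ i, IsClosed ((V i : Set X))) (hVmono : Monotone V)
    (hYcl : ∀ i, IsClosed ((Y i : Set (X →L[ℝ] ℝ)))) (hYmono : Monotone Y)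
    (hiso : ∀ i, ∀ x ∈ Y i, ‖x‖ = ‖x.comp (V i).subtypeL‖) :
    (∀ x ∈ (⨆ i, Y i).topologicalClosure,
        ‖x‖ = ‖x.comp ((⨆ i, V i).topologicalClosure).subtypeL‖) ∧
    ((∀ i, ∀ v : (V i : Submodule ℝ X) →L[ℝ] ℝ, ∃ x ∈ Y i, x.comp (V i).subtypeL = v) →
      (∀ w : ((⨆ i, V i).topologicalClosure : Submodule ℝ X) →L[ℝ] ℝ,
        w ∈ closure {u | ∃ x ∈ (⨆ i, Y i).topologicalClosure,
          x.comp ((⨆ i, V i).topologicalClosure).subtypeL = u}) →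
      ∀ w : ((⨆ i, V i).topologicalClosure : Submodule ℝ X) →L[ℝ] ℝ,
        ∃ x ∈ (⨆ i, Y i).topologicalClosure,
          x.comp ((⨆ i, V i).topologicalClosure).subtypeL = w) := by
  classical
  set Vc := (⨆ i, V i).topologicalClosure with hVcdef
  set Yc := (⨆ i, Y i).topologicalClosure with hYcdef
  set ρ : (X →L[ℝ] ℝ) →L[ℝ] ((Vc : Submodule ℝ X) →L[ℝ] ℝ) :=
    (ContinuousLinearMap.compL ℝ (Vc : Submodule ℝ X) X ℝ).flip Vc.subtypeL with hρ
  have hρapp : ∀ x : X →L[ℝ] ℝ, ρ x = x.comp Vc.subtypeL := fun x => rfl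
  have key : ∀ x ∈ Yc, ‖x‖ = ‖ρ x‖ := by
    have hsub : (↑(⨆ i, Y i) : Set (X →L[ℝ] ℝ)) ⊆ {x | ‖x‖ = ‖ρ x‖} := by
      intro x hx
      obtain ⟨i, hxi⟩ := (Submodule.mem_iSup_of_directed _ hYmono.directed_le).1 hx
      have h1 : ‖x‖ = ‖x.comp (V i).subtypeL‖ := hiso i x hxi
      have h2 : ‖x.comp (V i).subtypeL‖ ≤ ‖ρ x‖ := by
        refine ContinuousLinearMap.opNorm_le_bound _ ?_ fun v => ?_
        · exact norm_nonneg (ρ x)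
        · have hv : (v : X) ∈ Vc :=
            Submodule.le_topologicalClosure _ (Submodule.mem_iSup_of_mem i v.2)
          have he : (x.comp (V i).subtypeL) v = (ρ x) ⟨(v : X), hv⟩ := rfl
          rw [he]
          have hle := (ρ x).le_opNorm (⟨(v : X), hv⟩ : Vc)
          simpa using hle
      have h3 : ‖ρ x‖ ≤ ‖x‖ := by
        refine ContinuousLinearMap.opNorm_le_bound _ ?_ fun v => ?_
        · exact norm_nonneg x
        · simpa [hρapp] using x.le_opNorm (v : X)
      show ‖x‖ = ‖ρ x‖
      exact le_antisymm (h1.le.trans h2) h3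
    have hc2 : Continuous fun y : X →L[ℝ] ℝ => ‖ρ y‖ :=
      @Continuous.norm (X →L[ℝ] ℝ) ((Vc : Submodule ℝ X) →L[ℝ] ℝ) _ _ _ ρ.continuous
    have hclosed : IsClosed {x : X →L[ℝ] ℝ | ‖x‖ = ‖ρ x‖} := by
      exact isClosed_eq continuous_norm hc2
    intro x hx
    have hx' : x ∈ closure (↑(⨆ i, Y i) : Set (X →L[ℝ] ℝ)) := hx
    exact hclosed.closure_subset_iff.2 hsub hx'
  constructor
  · intro x hx
    exact key x hx
  · intro _ hdense w
    have hw : w ∈ closure {u | ∃ x ∈ Yc, ρ x = u} := hdense w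
    have hseq : ∀ n : ℕ, ∃ y ∈ {u | ∃ x ∈ Yc, ρ x = u}, dist w y < 1 / (n + 1 : ℝ) := by
      intro n
      exact Metric.mem_closure_iff.1 hw _ (by positivity)
    choose u huS hud using hseq
    choose x hxYc hxρ using huS
    have hd0 : Filter.Tendsto (fun n => dist (u n) w) Filter.atTop (nhds 0) := by
      refine squeeze_zero (fun n => dist_nonneg) (fun n => ?_)
        tendsto_one_div_add_atTop_nhds_zero_nat
      rw [dist_comm]
      exact (hud n).le
    have hul : Filter.Tendsto u Filter.atTop (nhds w) :=
      tendsto_iff_dist_tendsto_zero.2 hd0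
    have hcu : CauchySeq u := hul.cauchySeq
    have hcu2 : ∀ ε > 0, ∃ N, ∀ m ≥ N, ∀ n ≥ N, dist (u m) (u n) < ε :=
      Metric.cauchySeq_iff.1 hcu
    have hcx : CauchySeq x := by
      have h : ∀ ε > 0, ∃ N, ∀ m ≥ N, ∀ n ≥ N, dist (x m) (x n) < ε := by
        intro ε hε
        obtain ⟨N, hN⟩ := hcu2 ε hε
        refine ⟨N, fun m hm n hn => ?_⟩
        have h1 : ‖x m - x n‖ = ‖u m - u n‖ := by
          calc ‖x m - x n‖ = ‖ρ (x m - x n)‖ := key _ (sub_mem (hxYc m) (hxYc n))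
            _ = ‖u m - u n‖ := by rw [map_sub, hxρ m, hxρ n]
        have hdx : dist (x m) (x n) = ‖x m - x n‖ := by exact dist_eq_norm (x m) (x n)
        have hdn : dist (u m) (u n) = ‖u m - u n‖ := by exact dist_eq_norm (u m) (u n)
        rw [hdx, h1, ← hdn]
        exact hN m hm n hn
      exact Metric.cauchySeq_iff.2 h
    obtain ⟨z, hz⟩ := cauchySeq_tendsto_of_complete hcx
    have hzYc : z ∈ Yc := by
      have hcl : IsClosed (Yc : Set (X →L[ℝ] ℝ)) := Submodule.isClosed_topologicalClosure _
      exact hcl.mem_of_tendsto hz (Filter.Eventually.of_forall hxYc)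
    refine ⟨z, hzYc, ?_⟩
    have h1 : Filter.Tendsto (fun n => ρ (x n)) Filter.atTop (nhds (ρ z)) :=
      (ρ.continuous.tendsto z).comp hz
    have h2 : Filter.Tendsto (fun n => ρ (x n)) Filter.atTop (nhds w) :=
      (funext fun n => (hxρ n) : (fun n => ρ (x n)) = u) ▸ hul
    exact tendsto_nhds_unique h1 h2
end

section
/- Let X be a Banach space, C a countable subset of X, and G(C) a countable subset of X* such that ‖x*‖ = sup⟨x*, C ∩ B_X⟩ for every x* in the rational linear span of G(C), where the closed linear span of C equals V. Then ‖x*|_V‖ = ‖x*‖ for every x* in the closed linear span of G(C). -/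
set_option maxHeartbeats 1000000
set_option synthInstance.maxHeartbeats 1000000

/-- If every functional in the rational linear span of `G(C)` attains its norm as the
supremum over `C ∩ B_X`, then every functional in the closed linear span of `G(C)`
restricts isometrically to the closed linear span `V` of `C`. -/
theorem norm_eq_restriction_norm_of_sup_on_countable_set
    {X : Type*} [NormedAddCommGroup X] [NormedSpace ℝ X] [CompleteSpace X]
    (C : Set X) (hC : C.Countable)
    (D : Set (X →L[ℝ] ℝ)) (hD : D.Countable)
    (V : Submodule ℝ X) (hV : V = (Submodule.span ℝ C).topologicalClosure)
    (hsup : ∀ x ∈ Submodule.span ℚ D,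
      ‖x‖ = sSup ((fun y => x y) '' (C ∩ Metric.closedBall 0 1))) :
    ∀ x ∈ (Submodule.span ℝ D).topologicalClosure,
      ‖x.comp V.subtypeL‖ = ‖x‖ := by
  have hCV : ∀ y ∈ C, y ∈ V := fun y hy =>
    hV ▸ Submodule.le_topologicalClosure _ (Submodule.subset_span hy)
  set S : Set (X →L[ℝ] ℝ) := ((Submodule.span ℚ D : Submodule ℚ (X →L[ℝ] ℝ)) : Set (X →L[ℝ] ℝ)) with hS
  -- restriction does not increase the norm
  have hres : ∀ z : X →L[ℝ] ℝ, ‖z.comp V.subtypeL‖ ≤ ‖z‖ := fun z =>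
    ContinuousLinearMap.opNorm_le_bound _ (norm_nonneg z) fun v => by
      simpa using z.le_opNorm (v : X)
  -- on the rational span, the norm is attained on C ∩ B_X ⊆ B_V
  have hQP : ∀ x ∈ Submodule.span ℚ D, ‖x‖ ≤ ‖x.comp V.subtypeL‖ := by
    intro x hx
    rw [hsup x hx]
    apply Real.sSup_le
    · rintro _ ⟨y, ⟨hyC, hyB⟩, rfl⟩
      have hyV := hCV y hyC
      have hy1 : ‖y‖ ≤ 1 := by simpa using mem_closedBall_zero_iff.mp hyB
      have h1 : x y = (x.comp V.subtypeL) ⟨y, hyV⟩ := rfl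
      calc x y ≤ ‖(x.comp V.subtypeL) ⟨y, hyV⟩‖ := by rw [h1]; exact le_abs_self _
        _ ≤ ‖x.comp V.subtypeL‖ * ‖(⟨y, hyV⟩ : V)‖ := (x.comp V.subtypeL).le_opNorm _
        _ ≤ ‖x.comp V.subtypeL‖ * 1 :=
              mul_le_mul_of_nonneg_left hy1 (norm_nonneg (x.comp V.subtypeL))
        _ = ‖x.comp V.subtypeL‖ := mul_one _
    · exact norm_nonneg (x.comp V.subtypeL)
  -- closure of the rational span is stable under real scalar multiplication
  have hsmulmem : ∀ (r : ℝ) (y : X →L[ℝ] ℝ), y ∈ closure S → r • y ∈ closure S := by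
    intro r y hy
    have hmt : Set.MapsTo (fun z : X →L[ℝ] ℝ => r • z) S (closure S) := by
      intro z hz
      have hr : r ∈ closure (Set.range ((↑) : ℚ → ℝ)) := Rat.denseRange_cast r
      have hmt2 : Set.MapsTo (fun t : ℝ => t • z) (Set.range ((↑) : ℚ → ℝ)) S := by
        rintro _ ⟨q, rfl⟩
        show (q : ℝ) • z ∈ S
        rw [show ((q : ℝ)) • z = q • z by rw [ratCast_smul_eq ℝ ℚ q z]; simp]
        exact Submodule.smul_mem _ q hz
      exact map_mem_closure (f := fun t : ℝ => t • z)
        (continuous_id.smul continuous_const) hr hmt2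
    have h3 := map_mem_closure (f := fun z : X →L[ℝ] ℝ => r • z)
      (continuous_const_smul r) hy hmt
    simpa [closure_closure] using h3
  -- the real span is contained in the closure of the rational span
  have hspan : ∀ x ∈ Submodule.span ℝ D, x ∈ closure S := by
    intro x hx
    induction hx using Submodule.span_induction with
    | mem y hy => exact subset_closure (Submodule.subset_span hy)
    | zero => exact subset_closure (Submodule.zero_mem _)
    | add a b _ _ ha hb =>
        exact (AddSubgroup.add_mem (AddSubgroup.topologicalClosure
          (Submodule.span ℚ D).toAddSubgroup) ha hb : _)
    | smul r a _ ha => exact hsmulmem r a ha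
  intro x hx
  have hxS : x ∈ closure S := by
    have h2 : closure ((Submodule.span ℝ D : Submodule ℝ _) : Set (X →L[ℝ] ℝ)) ⊆ closure S :=
      closure_minimal hspan isClosed_closure
    exact h2 hx
  -- ε-argument for the reverse inequality
  have hle2 : ‖x‖ ≤ ‖x.comp V.subtypeL‖ := by
    refine le_of_forall_pos_le_add fun ε hε => ?_
    obtain ⟨y, hyS, hxy⟩ := Metric.mem_closure_iff.mp hxS (ε / 2) (by positivity)
    have hxy' : ‖x - y‖ < ε / 2 := by
      rw [← dist_eq_norm]; exact hxy
    have h4 : ‖(y - x).comp V.subtypeL‖ ≤ ε / 2 :=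
      le_trans (hres (y - x)) (by
        rw [norm_sub_rev] at hxy'
        exact le_of_lt hxy')
    have h5 : ‖y‖ ≤ ‖y.comp V.subtypeL‖ := hQP y hyS
    have h6 : ‖y.comp V.subtypeL‖ ≤ ‖x.comp V.subtypeL‖ + ‖(y - x).comp V.subtypeL‖ := by
      have : y.comp V.subtypeL = x.comp V.subtypeL + (y - x).comp V.subtypeL := by
        rw [← ContinuousLinearMap.add_comp]; congr 1; abel
      rw [this]
      exact norm_add_le (x.comp V.subtypeL) ((y - x).comp V.subtypeL)
    have h7 : ‖x‖ ≤ ‖y‖ + ‖x - y‖ := norm_le_insert' x y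
    linarith
  exact le_antisymm (hres x) hle2
end

section
/- Let X be a Banach space, f : X → (−∞, +∞] proper, V ⊆ X a closed subspace, v ∈ V with f(v) finite, and Y ⊆ X* a subspace such that the restriction map Y ∋ x* ↦ x*|_V ∈ V* is a surjective isometry and (∂_F f(v)) ∩ Y restricted to V equals ∂_F(f|_V)(v). If f|_V is Fréchet differentiable at v and also (−f)|_V is such that −(f|_V)'(v) ∈ ∂_F((−f)|_V)(v) lifts to ∂_F(−f)(v) ∩ Y under restriction, then f is Fréchet differentiable at v and ‖f′(v)‖ = ‖(f|_V)′(v)‖. -/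
/-- The Fréchet subdifferential of an extended-real-valued function. -/
def FrechetSubdiff {E : Type*} [NormedAddCommGroup E] [NormedSpace ℝ E]
    (f : E → EReal) (x : E) : Set (E →L[ℝ] ℝ) :=
  {x' | ∀ ε : ℝ, 0 < ε → ∃ δ : ℝ, 0 < δ ∧ ∀ h : E, 0 < ‖h‖ → ‖h‖ < δ →
    f (x + h) > f x + ((x' h - ε * ‖h‖ : ℝ) : EReal)}

set_option synthInstance.maxHeartbeats 1000000 in
/-- Separable reduction of Fréchet differentiability: if the restriction map from
`Y ⊆ X*` onto `V*` is a surjective isometry, its image of `∂_F f(v) ∩ Y` is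
`∂_F (f|_V)(v)` (and likewise for `−f`), and `f|_V` is Fréchet differentiable at `v`
(i.e. `v* ∈ ∂_F(f|_V)(v)` and `−v* ∈ ∂_F((−f)|_V)(v)`), then `f` is Fréchet
differentiable at `v` with derivative of the same norm as `(f|_V)'(v)`. -/
theorem frechet_differentiable_of_restriction
    {X : Type*} [NormedAddCommGroup X] [NormedSpace ℝ X] [CompleteSpace X]
    (f : X → EReal) (hbot : ∀ y, f y ≠ ⊥) (hproper : ∃ y, f y ≠ ⊤)
    (V : Submodule ℝ X) (hVcl : IsClosed (V : Set X))
    (v : V) (hfv : f v ≠ ⊤)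
    (Y : Submodule ℝ (X →L[ℝ] ℝ))
    (hiso : ∀ x ∈ Y, ‖x.comp V.subtypeL‖ = ‖x‖)
    (hsurj : ∀ w : V →L[ℝ] ℝ, ∃ x ∈ Y, x.comp V.subtypeL = w)
    (heq : (fun x : X →L[ℝ] ℝ => x.comp V.subtypeL) ''
        (FrechetSubdiff f (v : X) ∩ (Y : Set (X →L[ℝ] ℝ)))
      = FrechetSubdiff (fun u : V => f u) v)
    (heqneg : (fun x : X →L[ℝ] ℝ => x.comp V.subtypeL) ''
        (FrechetSubdiff (fun y : X => -f y) (v : X) ∩ (Y : Set (X →L[ℝ] ℝ)))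
      = FrechetSubdiff (fun u : V => -f u) v)
    (v' : V →L[ℝ] ℝ)
    (hv1 : v' ∈ FrechetSubdiff (fun u : V => f u) v)
    (hv2 : -v' ∈ FrechetSubdiff (fun u : V => -f u) v) :
    ∃ x' : X →L[ℝ] ℝ, x' ∈ FrechetSubdiff f (v : X) ∧
      -x' ∈ FrechetSubdiff (fun y : X => -f y) (v : X) ∧
      x'.comp V.subtypeL = v' ∧ ‖x'‖ = ‖v'‖ := by
  rw [← heq] at hv1
  rw [← heqneg] at hv2
  obtain ⟨x', ⟨hx1, hxY⟩, hxc⟩ := hv1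
  obtain ⟨x'', ⟨hx2, hx2Y⟩, hxc2⟩ := hv2
  replace hxc : x'.comp V.subtypeL = v' := hxc
  replace hxc2 : x''.comp V.subtypeL = -v' := hxc2
  have hsum : x'' = -x' := by
    have hmem : x' + x'' ∈ Y := Y.add_mem hxY hx2Y
    have hcomp : (x' + x'').comp V.subtypeL = 0 := by
      rw [ContinuousLinearMap.add_comp, hxc, hxc2, add_neg_cancel]
    have : ‖x' + x''‖ = 0 := by rw [← hiso _ hmem, hcomp]; exact norm_zero (E := ↥V →L[ℝ] ℝ)
    have h0 : x' + x'' = 0 := by rwa [norm_eq_zero] at this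
    linear_combination (norm := module) h0
  refine ⟨x', hx1, ?_, hxc, ?_⟩
  · rwa [← hsum]
  · rw [← hiso _ hxY, hxc]
end

section
/- Let X be a Banach space that admits a function f : X → ℝ which is Fréchet differentiable with continuous derivative f′ : X → X*, such that for every closed subspace V of X the set {f′(v)|_V : v ∈ V} is dense in V*. Then the map G sending a countable set C ⊆ X to f′(sp_ℚ C) satisfies: (sp̄ C)* ⊆ closure of G(C)|_{sp̄ C} for every countable C ⊆ X. -/
/-- The set of finite rational linear combinations of elements of `C`. -/
def ratSpan {X : Type*} [NormedAddCommGroup X] [NormedSpace ℝ X] (C : Set X) : Set X :=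
  {x | ∃ (n : ℕ) (c : Fin n → ℚ) (v : Fin n → X),
    (∀ i, v i ∈ C) ∧ x = ∑ i, (c i : ℝ) • v i}

/-- If `X` admits a Fréchet smooth function `f` with continuous derivative `f'` whose
restricted derivatives `{f'(v)|_V : v ∈ V}` are dense in `V*` for every closed
subspace `V`, then for every countable `C ⊆ X` the restrictions to `sp̄ C` of the
functionals `f'(x)`, `x ∈ sp_ℚ C`, are dense in `(sp̄ C)*`. -/
theorem asplund_generator_property_of_smooth_function
    {X : Type*} [NormedAddCommGroup X] [NormedSpace ℝ X] [CompleteSpace X]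
    (f : X → ℝ) (f' : X → (X →L[ℝ] ℝ))
    (hdiff : ∀ x, HasFDerivAt f (f' x) x)
    (hcont : Continuous f')
    (hdense : ∀ V : Submodule ℝ X, IsClosed (V : Set X) →
      ∀ w : V →L[ℝ] ℝ, w ∈ closure {u | ∃ v ∈ V, (f' v).comp V.subtypeL = u}) :
    ∀ C : Set X, C.Countable →
      ∀ w : ((Submodule.span ℝ C).topologicalClosure : Submodule ℝ X) →L[ℝ] ℝ,
        w ∈ closure {u | ∃ x ∈ ratSpan C,
          (f' x).comp (Submodule.span ℝ C).topologicalClosure.subtypeL = u} := by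
  intro C hC
  set V : Submodule ℝ X := (Submodule.span ℝ C).topologicalClosure with hVdef
  intro w
  -- basic closure properties of ratSpan
  have hzero : (0:X) ∈ ratSpan C := ⟨0, Fin.elim0, Fin.elim0, fun i => i.elim0, by simp⟩
  have hadd : ∀ x ∈ ratSpan C, ∀ y ∈ ratSpan C, x + y ∈ ratSpan C := by
    rintro x ⟨n, c, v, hv, rfl⟩ y ⟨m, d, u, hu, rfl⟩
    refine ⟨n + m, Fin.append c d, Fin.append v u, ?_, ?_⟩
    · intro i
      refine Fin.addCases (fun i => ?_) (fun i => ?_) i <;>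
        simp [Fin.append_left, Fin.append_right, hv, hu]
    · rw [Fin.sum_univ_add]
      simp [Fin.append_left, Fin.append_right]
  have hsingle : ∀ x ∈ C, x ∈ ratSpan C := fun x hx =>
    ⟨1, fun _ => 1, fun _ => x, fun _ => hx, by simp⟩
  have hqsmul : ∀ (q : ℚ), ∀ x ∈ ratSpan C, (q : ℝ) • x ∈ ratSpan C := by
    rintro q x ⟨n, c, v, hv, rfl⟩
    refine ⟨n, fun i => q * c i, v, hv, ?_⟩
    rw [Finset.smul_sum]
    congr 1; ext i
    push_cast
    rw [mul_smul]
  set D : Set X := closure (ratSpan C) with hDdef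
  have hDadd : ∀ x ∈ D, ∀ y ∈ D, x + y ∈ D := by
    intro x hx y hy
    let M : AddSubmonoid X := ⟨⟨ratSpan C, fun ha hb => hadd _ ha _ hb⟩, hzero⟩
    exact M.topologicalClosure.add_mem hx hy
  have hDsmul : ∀ (r : ℝ), ∀ x ∈ D, r • x ∈ D := by
    have step1 : ∀ x ∈ ratSpan C, ∀ r : ℝ, r • x ∈ D := by
      intro x hx r
      have hcl : IsClosed {r : ℝ | r • x ∈ D} :=
        IsClosed.preimage (continuous_id.smul continuous_const) isClosed_closure
      have hsub : Set.range ((↑) : ℚ → ℝ) ⊆ {r : ℝ | r • x ∈ D} := by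
        rintro _ ⟨q, rfl⟩
        exact subset_closure (hqsmul q x hx)
      have : closure (Set.range ((↑) : ℚ → ℝ)) ⊆ {r : ℝ | r • x ∈ D} :=
        closure_minimal hsub hcl
      exact this (by rw [Rat.denseRange_cast.closure_range]; trivial)
    intro r x hx
    have himg : r • x ∈ (fun y => r • y) '' D := ⟨x, hx, rfl⟩
    have h1 : (fun y => r • y) '' D ⊆ closure ((fun y => r • y) '' ratSpan C) :=
      image_closure_subset_closure_image (continuous_const.smul continuous_id)
    have h2 : (fun y => r • y) '' ratSpan C ⊆ D := by
      rintro _ ⟨y, hy, rfl⟩; exact step1 y hy r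
    have := h1 himg
    rw [hDdef]
    exact closure_minimal h2 isClosed_closure this
  -- V ⊆ D
  have hVD : (V : Set X) ⊆ D := by
    have hspan : (Submodule.span ℝ C : Set X) ⊆ D := by
      intro x hx
      refine Submodule.span_induction (fun y hy => subset_closure (hsingle y hy))
        (subset_closure hzero) (fun a b _ _ ha hb => hDadd a ha b hb)
        (fun r a _ ha => hDsmul r a ha) hx
    exact closure_minimal hspan isClosed_closure
  -- the restriction map
  set T : X → (V →L[ℝ] ℝ) := fun x => (f' x).comp V.subtypeL with hTdef
  have hT : Continuous T := by
    have h1 : Continuous (fun g : X →L[ℝ] ℝ => g.comp V.subtypeL) :=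
      ((ContinuousLinearMap.compL ℝ (↥V) X ℝ).flip V.subtypeL).continuous
    exact h1.comp hcont
  have hw := hdense V (Submodule.isClosed_topologicalClosure _) w
  have hsub : {u | ∃ v ∈ V, T v = u} ⊆
      closure {u | ∃ x ∈ ratSpan C, T x = u} := by
    rintro _ ⟨v, hv, rfl⟩
    have h1 : T v ∈ T '' D := ⟨v, hVD hv, rfl⟩
    have h2 : T '' D ⊆ closure (T '' ratSpan C) := image_closure_subset_closure_image hT
    have h3 : T '' ratSpan C ⊆ {u | ∃ x ∈ ratSpan C, T x = u} := by
      rintro _ ⟨x, hx, rfl⟩; exact ⟨x, hx, rfl⟩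
    exact closure_mono h3 (h2 h1)
  exact closure_minimal hsub isClosed_closure hw
end

section
/- Let K be a compact Hausdorff topological space. If A, B ∈ Clop(K) (clopen subsets of K) and the uniform distance between the indicator functions 𝟙_B and a linear combination f of indicator functions of pairwise disjoint clopen sets A₁, …, Aₙ satisfies ‖𝟙_B − f‖_∞ < 1/4, then B is a union of finitely many of the sets A₁, …, Aₙ. -/
open Set

/-- If the indicator function of a clopen set `B` is uniformly within `1/4` of a linear
combination of indicator functions of pairwise disjoint clopen sets `A₁, …, Aₙ`, then
`B` is the union of finitely many of the sets `Aᵢ`. -/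
theorem clopen_indicator_approximation
    {K : Type*} [TopologicalSpace K] [CompactSpace K] [T2Space K]
    (B : Set K) (hB : IsClopen B)
    (n : ℕ) (A : Fin n → Set K) (hA : ∀ i, IsClopen (A i))
    (hdisj : ∀ i j, i ≠ j → Disjoint (A i) (A j))
    (c : Fin n → ℝ)
    (happrox : ∀ x : K,
      |indicator B (fun _ => (1 : ℝ)) x - ∑ i, c i * indicator (A i) (fun _ => (1 : ℝ)) x|
        < 1 / 4) :
    ∃ s : Finset (Fin n), B = ⋃ i ∈ s, A i := by
  have hsum : ∀ (i : Fin n) (x : K), x ∈ A i →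
      (∑ j, c j * indicator (A j) (fun _ => (1 : ℝ)) x) = c i := by
    intro i x hx
    rw [Finset.sum_eq_single i]
    · simp [indicator_of_mem hx]
    · intro j _ hj
      have hxj : x ∉ A j := fun h => (hdisj j i hj).le_bot ⟨h, hx⟩ |>.elim
      simp [indicator_of_notMem hxj]
    · simp
  classical
  refine ⟨Finset.univ.filter (fun i => (1:ℝ)/2 < c i), ?_⟩
  ext x
  simp only [mem_iUnion, Finset.mem_filter, Finset.mem_univ, true_and]
  constructor
  · intro hxB
    have h := happrox x
    rw [indicator_of_mem hxB] at h
    by_cases hex : ∃ i, x ∈ A i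
    · obtain ⟨i, hi⟩ := hex
      rw [hsum i x hi] at h
      refine ⟨i, ?_, hi⟩
      have : |(1:ℝ) - c i| < 1/4 := h
      rw [abs_sub_lt_iff] at this
      linarith [this.1]
    · have : (∑ j, c j * indicator (A j) (fun _ => (1 : ℝ)) x) = 0 := by
        apply Finset.sum_eq_zero
        intro j _
        have : x ∉ A j := fun h => hex ⟨j, h⟩
        simp [indicator_of_notMem this]
      rw [this] at h
      norm_num at h
  · rintro ⟨i, hci, hxi⟩
    by_contra hxB
    have h := happrox x
    rw [indicator_of_notMem hxB, hsum i x hxi] at h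
    rw [abs_sub_lt_iff] at h
    linarith [h.2]
end

section
/- Let X be a Banach space, f : X → (−∞, +∞] proper, and suppose x* ∉ ∂_F f(x) at a point x with f(x) finite. Then there exists ε > 0 such that for every δ > 0 there exists h with 0 < ‖h‖ < δ and f(x+h) − f(x) − x*(h) ≤ −ε‖h‖; moreover, for any x₀, x₀*, q′ with ‖x₀ − x‖, ‖x₀* − x*‖, |f(x) − q′| all smaller than a suitable η > 0 (depending only on ε, δ, ‖x*‖ and a rational lower bound q on ‖h‖), the vector h′ := h + (x − x₀) satisfies f(x₀ + h′) − q′ − x₀*(h′) < −(2/3)ε‖h′‖ and q − η < ‖h′‖ < δ/2. -/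
/-- Quantitative perturbation estimate: if `x* ∉ ∂_F f(x)`, there is `ε > 0` such that
for every `δ > 0` some `h` with `0 < ‖h‖ < δ` violates the subdifferential inequality;
moreover, any witness `h` with `‖h‖ < δ/3`, any rational `q ∈ (0, ‖h‖)` and any
sufficiently small `η > 0` admit a stable perturbed estimate: for all `x₀, x₀*, q′`
within `η` of `x, x*, f(x)`, the vector `h′ := h + (x − x₀)` satisfies
`q − η < ‖h′‖ < δ/2` and `f(x₀ + h′) − q′ − x₀*(h′) < −(2/3)ε‖h′‖`. -/
theorem perturbation_estimate_of_not_mem_frechetSubdiff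
    {X : Type*} [NormedAddCommGroup X] [NormedSpace ℝ X] [CompleteSpace X]
    (f : X → EReal) (hbot : ∀ y, f y ≠ ⊥) (hproper : ∃ y, f y ≠ ⊤)
    (x : X) (fx : ℝ) (hfx : f x = (fx : EReal))
    (x' : X →L[ℝ] ℝ) (hnot : x' ∉ FrechetSubdiff f x) :
    ∃ ε : ℝ, 0 < ε ∧
      (∀ δ : ℝ, 0 < δ → ∃ h : X, 0 < ‖h‖ ∧ ‖h‖ < δ ∧
        f (x + h) ≤ ((fx + x' h - ε * ‖h‖ : ℝ) : EReal)) ∧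
      (∀ δ : ℝ, 0 < δ → ∀ h : X, 0 < ‖h‖ → ‖h‖ < δ / 3 →
        f (x + h) ≤ ((fx + x' h - ε * ‖h‖ : ℝ) : EReal) →
        ∀ q : ℚ, 0 < (q : ℝ) → (q : ℝ) < ‖h‖ →
        ∀ η : ℝ, 0 < η →
          η < min (δ / 6) (min ((q : ℝ) / 2)
            ((q : ℝ) * ε / (3 * (1 + ‖x'‖ + δ / 2 + 4 * ε / 3)))) →
        ∀ (x₀ : X) (x₀' : X →L[ℝ] ℝ) (q' : ℝ),
          ‖x₀ - x‖ ≤ η → ‖x₀' - x'‖ ≤ η → |fx - q'| ≤ η →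
          ((q : ℝ) - η < ‖h + (x - x₀)‖ ∧ ‖h + (x - x₀)‖ < δ / 2 ∧
            f (x₀ + (h + (x - x₀)))
              < ((q' + x₀' (h + (x - x₀)) - (2 / 3) * ε * ‖h + (x - x₀)‖ : ℝ) : EReal))) := by
  simp only [FrechetSubdiff, Set.mem_setOf_eq] at hnot
  push_neg at hnot
  obtain ⟨ε, hε, hεall⟩ := hnot
  refine ⟨ε, hε, ?_, ?_⟩
  · intro δ hδ
    obtain ⟨h, h1, h2, h3⟩ := hεall δ hδ
    refine ⟨h, h1, h2, ?_⟩
    rw [hfx] at h3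
    calc f (x + h) ≤ (fx : EReal) + ((x' h - ε * ‖h‖ : ℝ) : EReal) := h3
      _ = ((fx + x' h - ε * ‖h‖ : ℝ) : EReal) := by
          rw [show fx + x' h - ε * ‖h‖ = fx + (x' h - ε * ‖h‖) by ring, EReal.coe_add]
  · intro δ hδ h h1 h2 hfle q hq hqh η hη hηlt x₀ x₀' q' hx₀ hx₀' hq'
    have hηδ : η < δ / 6 := lt_of_lt_of_le hηlt (min_le_left _ _)
    have hηq : η < (q : ℝ) / 2 :=
      lt_of_lt_of_le hηlt ((min_le_right _ _).trans (min_le_left _ _))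
    have hηε : η < (q : ℝ) * ε / (3 * (1 + ‖x'‖ + δ / 2 + 4 * ε / 3)) :=
      lt_of_lt_of_le hηlt ((min_le_right _ _).trans (min_le_right _ _))
    set h' := h + (x - x₀) with hh'
    have hdiff : ‖h' - h‖ ≤ η := by
      have : h' - h = -(x₀ - x) := by rw [hh']; abel
      rw [this, norm_neg]; exact hx₀
    have habs : |‖h'‖ - ‖h‖| ≤ η := (abs_norm_sub_norm_le h' h).trans hdiff
    have hlo : ‖h‖ - η ≤ ‖h'‖ := by
      have := abs_le.1 habs; linarith [this.1]
    have hhi : ‖h'‖ ≤ ‖h‖ + η := by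
      have := abs_le.1 habs; linarith [this.2]
    have hb1 : (q : ℝ) - η < ‖h'‖ := by linarith
    have hb2 : ‖h'‖ < δ / 2 := by linarith
    refine ⟨hb1, hb2, ?_⟩
    have hsum : x₀ + h' = x + h := by rw [hh']; abel
    rw [hsum]
    -- real inequality
    have hfunc : |x' h - x₀' h'| ≤ ‖x'‖ * η + η * ‖h'‖ := by
      have e1 : x' h - x₀' h' = x' (h - h') + (x' - x₀') h' := by
        simp [map_sub, ContinuousLinearMap.sub_apply]
      rw [e1]
      calc |x' (h - h') + (x' - x₀') h'| ≤ |x' (h - h')| + |(x' - x₀') h'| :=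
            abs_add_le _ _
        _ ≤ ‖x'‖ * ‖h - h'‖ + ‖x' - x₀'‖ * ‖h'‖ := by
            gcongr <;> rw [← Real.norm_eq_abs] <;> exact ContinuousLinearMap.le_opNorm _ _
        _ ≤ ‖x'‖ * η + η * ‖h'‖ := by
            have h1' : ‖h - h'‖ ≤ η := by rwa [norm_sub_rev]
            have h2' : ‖x' - x₀'‖ ≤ η := by rwa [norm_sub_rev]
            gcongr
    have hden : 0 < 3 * (1 + ‖x'‖ + δ / 2 + 4 * ε / 3) := by
      have := norm_nonneg x'
      nlinarith
    have hηε' : η * (3 * (1 + ‖x'‖ + δ / 2 + 4 * ε / 3)) < (q : ℝ) * ε := by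
      rwa [lt_div_iff₀ hden] at hηε
    have hreal : fx + x' h - ε * ‖h‖ < q' + x₀' h' - 2 / 3 * ε * ‖h'‖ := by
      have hq'' := abs_le.1 hq'
      have hfunc' := abs_le.1 hfunc
      have hnx : (0:ℝ) ≤ ‖x'‖ := norm_nonneg x'
      nlinarith [hq''.1, hq''.2, hfunc'.1, hfunc'.2, hε.le, hη.le]
    calc f (x + h) ≤ ((fx + x' h - ε * ‖h‖ : ℝ) : EReal) := hfle
      _ < ((q' + x₀' h' - 2 / 3 * ε * ‖h'‖ : ℝ) : EReal) := by exact_mod_cast hreal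
end
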